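/- If for every N the point θ̂_N maximizes a function F_N over a set Θ, F_N = G_N + H_N with G_N maximized at α_N and H_N maximized at β_N, both G_N and H_N concave on convex Θ ⊆ ℝᵈ with d = 1, then θ̂_N lies in the segment [min(α_N, β_N), max(α_N, β_N)]; consequently, if α_N → θ* and β_N → θ*, then θ̂_N → θ*. -/
import Mathlib

private lemma aux_min (Θ : Set ℝ) (G H : ℝ → ℝ)
    (hG : ConcaveOn ℝ Θ G) (hH : ConcaveOn ℝ Θ H)
    (a b c : ℝ) (ha : a ∈ Θ) (hb : b ∈ Θ) (hc : c ∈ Θ)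
    (hGa : ∀ x ∈ Θ, G x ≤ G a) (hGu : ∀ x ∈ Θ, G x = G a → x = a)
    (hHb : ∀ x ∈ Θ, H x ≤ H b)
    (hm : ∀ x ∈ Θ, G x + H x ≤ G c + H c) :
    min a b ≤ c := by
  by_contra h
  push_neg at h
  set m := min a b with hmdef
  have hmΘ : m ∈ Θ := by rcases min_cases a b with ⟨he, _⟩ | ⟨he, _⟩ <;> rw [hmdef, he] <;> assumption
  have hma : m ≤ a := min_le_left a b
  have hmb : m ≤ b := min_le_right a b
  have hca : c < a := lt_of_lt_of_le h hma
  have hcb : c < b := lt_of_lt_of_le h hmb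
  set t := (m - c) / (a - c) with htdef
  set s := (m - c) / (b - c) with hsdef
  have ht0 : 0 < t := div_pos (by linarith) (by linarith)
  have ht1 : t ≤ 1 := by
    rw [htdef, div_le_one (by linarith)]; linarith
  have hs0 : 0 < s := div_pos (by linarith) (by linarith)
  have hs1 : s ≤ 1 := by
    rw [hsdef, div_le_one (by linarith)]; linarith
  have hane : a - c ≠ 0 := by intro hh; linarith
  have hbne : b - c ≠ 0 := by intro hh; linarith
  have hmeqa : (1 - t) • c + t • a = m := by
    simp only [smul_eq_mul, htdef]; field_simp; ring
  have hmeqb : (1 - s) • c + s • b = m := by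
    simp only [smul_eq_mul, hsdef]; field_simp; ring
  have hGm : (1 - t) * G c + t * G a ≤ G m := by
    have := hG.2 hc ha (by linarith : (0:ℝ) ≤ 1 - t) (le_of_lt ht0) (by ring)
    rw [hmeqa] at this
    simpa [smul_eq_mul] using this
  have hHm : (1 - s) * H c + s * H b ≤ H m := by
    have := hH.2 hc hb (by linarith : (0:ℝ) ≤ 1 - s) (le_of_lt hs0) (by ring)
    rw [hmeqb] at this
    simpa [smul_eq_mul] using this
  have hHcb : H c ≤ H b := hHb c hc
  have hHcm : H c ≤ H m := by nlinarith
  have hGmc : G m ≤ G c := by have := hm m hmΘ; linarith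
  have hGac : G a ≤ G c := by nlinarith
  have hGca : G c = G a := le_antisymm (hGa c hc) hGac
  have : c = a := hGu c hc hGca
  linarith

private lemma aux_max (Θ : Set ℝ) (G H : ℝ → ℝ)
    (hG : ConcaveOn ℝ Θ G) (hH : ConcaveOn ℝ Θ H)
    (a b c : ℝ) (ha : a ∈ Θ) (hb : b ∈ Θ) (hc : c ∈ Θ)
    (hGa : ∀ x ∈ Θ, G x ≤ G a) (hGu : ∀ x ∈ Θ, G x = G a → x = a)
    (hHb : ∀ x ∈ Θ, H x ≤ H b)
    (hm : ∀ x ∈ Θ, G x + H x ≤ G c + H c) :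
    c ≤ max a b := by
  by_contra h
  push_neg at h
  set m := max a b with hmdef
  have hmΘ : m ∈ Θ := by rcases max_cases a b with ⟨he, _⟩ | ⟨he, _⟩ <;> rw [hmdef, he] <;> assumption
  have hma : a ≤ m := le_max_left a b
  have hmb : b ≤ m := le_max_right a b
  have hca : a < c := lt_of_le_of_lt hma h
  have hcb : b < c := lt_of_le_of_lt hmb h
  set t := (c - m) / (c - a) with htdef
  set s := (c - m) / (c - b) with hsdef
  have ht0 : 0 < t := div_pos (by linarith) (by linarith)
  have ht1 : t ≤ 1 := by
    rw [htdef, div_le_one (by linarith)]; linarith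
  have hs0 : 0 < s := div_pos (by linarith) (by linarith)
  have hs1 : s ≤ 1 := by
    rw [hsdef, div_le_one (by linarith)]; linarith
  have hane : c - a ≠ 0 := by intro hh; linarith
  have hbne : c - b ≠ 0 := by intro hh; linarith
  have hmeqa : (1 - t) • c + t • a = m := by
    simp only [smul_eq_mul, htdef]; field_simp; ring
  have hmeqb : (1 - s) • c + s • b = m := by
    simp only [smul_eq_mul, hsdef]; field_simp; ring
  have hGm : (1 - t) * G c + t * G a ≤ G m := by
    have := hG.2 hc ha (by linarith : (0:ℝ) ≤ 1 - t) (le_of_lt ht0) (by ring)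
    rw [hmeqa] at this
    simpa [smul_eq_mul] using this
  have hHm : (1 - s) * H c + s * H b ≤ H m := by
    have := hH.2 hc hb (by linarith : (0:ℝ) ≤ 1 - s) (le_of_lt hs0) (by ring)
    rw [hmeqb] at this
    simpa [smul_eq_mul] using this
  have hHcb : H c ≤ H b := hHb c hc
  have hHcm : H c ≤ H m := by nlinarith
  have hGmc : G m ≤ G c := by have := hm m hmΘ; linarith
  have hGac : G a ≤ G c := by nlinarith
  have hGca : G c = G a := le_antisymm (hGa c hc) hGac
  have : c = a := hGu c hc hGca
  linarith

theorem stmt_18 (Θ : Set ℝ) (hΘ : Convex ℝ Θ)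
    (G H : ℕ → ℝ → ℝ) (α β θhat : ℕ → ℝ) (θstar : ℝ)
    (hG : ∀ N, ConcaveOn ℝ Θ (G N)) (hH : ∀ N, ConcaveOn ℝ Θ (H N))
    (hα : ∀ N, α N ∈ Θ) (hβ : ∀ N, β N ∈ Θ) (hθhat : ∀ N, θhat N ∈ Θ)
    (hαmax : ∀ N, ∀ x ∈ Θ, G N x ≤ G N (α N))
    (hαuniq : ∀ N, ∀ x ∈ Θ, G N x = G N (α N) → x = α N)
    (hβmax : ∀ N, ∀ x ∈ Θ, H N x ≤ H N (β N))
    (hβuniq : ∀ N, ∀ x ∈ Θ, H N x = H N (β N) → x = β N)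
    (hmax : ∀ N, ∀ x ∈ Θ, G N x + H N x ≤ G N (θhat N) + H N (θhat N)) :
    (∀ N, θhat N ∈ Set.Icc (min (α N) (β N)) (max (α N) (β N))) ∧
      (Filter.Tendsto α Filter.atTop (nhds θstar) →
        Filter.Tendsto β Filter.atTop (nhds θstar) →
        Filter.Tendsto θhat Filter.atTop (nhds θstar)) := by
  have key : ∀ N, θhat N ∈ Set.Icc (min (α N) (β N)) (max (α N) (β N)) := by
    intro N
    constructor
    · exact aux_min Θ (G N) (H N) (hG N) (hH N) (α N) (β N) (θhat N)
        (hα N) (hβ N) (hθhat N) (hαmax N) (hαuniq N) (hβmax N) (hmax N)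
    · exact aux_max Θ (G N) (H N) (hG N) (hH N) (α N) (β N) (θhat N)
        (hα N) (hβ N) (hθhat N) (hαmax N) (hαuniq N) (hβmax N) (hmax N)
  refine ⟨key, fun hαt hβt => ?_⟩
  have hmin : Filter.Tendsto (fun N => min (α N) (β N)) Filter.atTop (nhds θstar) := by
    simpa using hαt.min hβt
  have hmaxt : Filter.Tendsto (fun N => max (α N) (β N)) Filter.atTop (nhds θstar) := by
    simpa using hαt.max hβt
  exact tendsto_of_tendsto_of_tendsto_of_le_of_le hmin hmaxt
    (fun N => (key N).1) (fun N => (key N).2)
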